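/- Let L be a real m × m matrix with the discrete maximum-principle property: for every w ∈ ℝ^m and every index i₀ such that w_{i₀} = max_i w_i, one has (Lw)_{i₀} ≤ 0. Then {exp(τL)}_{τ≥0} is a contraction semigroup in the supremum norm, i.e., ‖exp(τL) w‖ ≤ ‖w‖ for every τ ≥ 0 and every w ∈ ℝ^m. -/

import Mathlib

/-- If `L` satisfies the discrete maximum-principle property (whenever `w` attains its maximum
at index `i₀`, `(Lw)_{i₀} ≤ 0`), then `{exp(τL)}_{τ ≥ 0}` is a contraction semigroup in the
supremum norm: `‖exp(τL) w‖ ≤ ‖w‖` for all `τ ≥ 0` and all `w`. -/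
theorem stmt_3 (m : ℕ) (L : Matrix (Fin m) (Fin m) ℝ)
    (hL : ∀ (w : Fin m → ℝ) (i₀ : Fin m), (∀ i, w i ≤ w i₀) → L.mulVec w i₀ ≤ 0) :
    ∀ τ : ℝ, 0 ≤ τ → ∀ w : Fin m → ℝ,
      ‖(NormedSpace.exp (τ • L)).mulVec w‖ ≤ ‖w‖ := by
  classical
  intro τ hτ w
  -- Structural consequences of the maximum principle
  have hdiag : ∀ i, L i i ≤ 0 := by
    intro i
    have h := hL (Pi.single i 1) i (by
      intro k
      by_cases hk : k = i
      · subst hk; exact le_rfl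
      · simp [Pi.single_apply, hk])
    simpa [Matrix.mulVec_single] using h
  have hoff : ∀ i j, i ≠ j → 0 ≤ L i j := by
    intro i j hij
    have h := hL (-(Pi.single j 1)) i (by
      intro k
      by_cases hk : k = j
      · subst hk; simp [Pi.single_apply, hij.symm]
      · simp [Pi.single_apply, hk, hij])
    rw [Matrix.mulVec_neg] at h
    have h2 : -(L.mulVec (Pi.single j 1) i) ≤ 0 := h
    rw [Matrix.mulVec_single] at h2
    simpa using h2
  have hrow : ∀ i, ∑ j, L i j ≤ 0 := by
    intro i
    have h := hL (fun _ => 1) i (fun k => le_rfl)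
    simpa [Matrix.mulVec, dotProduct] using h
  -- Shift constant
  set c : ℝ := ∑ i, -(L i i) with hc
  have hc0 : 0 ≤ c := Finset.sum_nonneg fun i _ => by linarith [hdiag i]
  have hci : ∀ i, -(L i i) ≤ c := by
    intro i
    rw [hc]
    exact Finset.single_le_sum (f := fun k => -(L k k))
      (fun k _ => neg_nonneg.mpr (hdiag k)) (Finset.mem_univ i)
  set A : Matrix (Fin m) (Fin m) ℝ := L + c • (1 : Matrix (Fin m) (Fin m) ℝ) with hA
  have hAapp : ∀ i j, A i j = L i j + c * (if i = j then 1 else 0) := by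
    intro i j
    simp [hA, Matrix.add_apply, Matrix.smul_apply, Matrix.one_apply, smul_eq_mul]
  have hA0 : ∀ i j, 0 ≤ A i j := by
    intro i j
    rw [hAapp]
    by_cases hij : i = j
    · subst hij; rw [if_pos rfl, mul_one]; linarith [hci i]
    · simp only [if_neg hij, mul_zero, add_zero]; exact hoff i j hij
  have hArow : ∀ i, ∑ j, A i j ≤ c := by
    intro i
    have : ∑ j, A i j = (∑ j, L i j) + c := by
      simp only [hAapp]
      rw [Finset.sum_add_distrib]
      simp [Finset.sum_ite_eq' Finset.univ i]
    rw [this]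
    linarith [hrow i]
  -- Powers of A
  have hpow : ∀ n : ℕ, (∀ i j, 0 ≤ (A ^ n) i j) ∧ (∀ i, ∑ j, (A ^ n) i j ≤ c ^ n) := by
    intro n
    induction n with
    | zero =>
      constructor
      · intro i j; simp [Matrix.one_apply]; positivity
      · intro i; simp [Matrix.one_apply, Finset.sum_ite_eq' Finset.univ i]
    | succ n ih =>
      have hmulapp : ∀ i j, (A ^ (n+1)) i j = ∑ k, A i k * (A ^ n) k j := by
        intro i j
        rw [pow_succ']
        simp [Matrix.mul_apply]
      constructor
      · intro i j
        rw [hmulapp]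
        exact Finset.sum_nonneg fun k _ => mul_nonneg (hA0 i k) (ih.1 k j)
      · intro i
        have h1 : ∑ j, (A ^ (n+1)) i j = ∑ k, A i k * ∑ j, (A ^ n) k j := by
          simp only [hmulapp]
          rw [Finset.sum_comm]
          simp [Finset.mul_sum]
        rw [h1, pow_succ]
        calc ∑ k, A i k * ∑ j, (A ^ n) k j
            ≤ ∑ k, A i k * c ^ n :=
              Finset.sum_le_sum fun k _ => mul_le_mul_of_nonneg_left (ih.2 k) (hA0 i k)
          _ = (∑ k, A i k) * c ^ n := by rw [Finset.sum_mul]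
          _ ≤ c * c ^ n :=
              mul_le_mul_of_nonneg_right (hArow i) (pow_nonneg hc0 n)
          _ = c ^ n * c := mul_comm _ _
  -- exponential of τ•A
  letI : SeminormedRing (Matrix (Fin m) (Fin m) ℝ) := Matrix.linftyOpSemiNormedRing
  letI : NormedRing (Matrix (Fin m) (Fin m) ℝ) := Matrix.linftyOpNormedRing
  letI : NormedAlgebra ℝ (Matrix (Fin m) (Fin m) ℝ) := Matrix.linftyOpNormedAlgebra
  set E : Matrix (Fin m) (Fin m) ℝ := NormedSpace.exp (τ • A) with hEdef
  have hsum : Summable (fun n : ℕ => ((n.factorial : ℝ))⁻¹ • (τ • A) ^ n) :=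
    NormedSpace.expSeries_summable' (𝕂 := ℝ) (τ • A)
  have hsum2 : ∀ i j, Summable (fun n : ℕ => (((n.factorial : ℝ))⁻¹ • (τ • A) ^ n) i j) :=
    fun i j => Pi.summable.1 (Pi.summable.1 hsum i) j
  have hterm : ∀ (n : ℕ) (i j : Fin m), (((n.factorial : ℝ))⁻¹ • (τ • A) ^ n) i j
      = ((n.factorial : ℝ))⁻¹ * (τ ^ n * (A ^ n) i j) := by
    intro n i j
    rw [smul_pow]
    simp [Matrix.smul_apply, smul_eq_mul, mul_assoc]
  have hsum2' : ∀ i j, Summable (fun n : ℕ => ((n.factorial : ℝ))⁻¹ * (τ ^ n * (A ^ n) i j)) :=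
    fun i j => (hsum2 i j).congr fun n => hterm n i j
  have hEentry : ∀ i j, E i j = ∑' n : ℕ, ((n.factorial : ℝ))⁻¹ * (τ ^ n * (A ^ n) i j) := by
    intro i j
    rw [hEdef, NormedSpace.exp_eq_tsum ℝ]
    show (∑' n : ℕ, ((n.factorial : ℝ))⁻¹ • (τ • A) ^ n) i j = _
    erw [tsum_apply hsum, tsum_apply (Pi.summable.1 hsum i)]
    exact tsum_congr fun n => hterm n i j
  have htermnn : ∀ (n : ℕ) (i j : Fin m),
      0 ≤ ((n.factorial : ℝ))⁻¹ * (τ ^ n * (A ^ n) i j) := fun n i j =>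
    mul_nonneg (by positivity) (mul_nonneg (pow_nonneg hτ n) ((hpow n).1 i j))
  have hE0 : ∀ i j, 0 ≤ E i j := by
    intro i j
    rw [hEentry]
    exact tsum_nonneg fun n => htermnn n i j
  have hErow : ∀ i, ∑ j, E i j ≤ Real.exp (τ * c) := by
    intro i
    have h1 : ∑ j, E i j = ∑' n : ℕ, ∑ j, ((n.factorial : ℝ))⁻¹ * (τ ^ n * (A ^ n) i j) := by
      simp only [hEentry]
      exact (Summable.tsum_finsetSum (fun j _ => hsum2' i j)).symm
    have h2 : ∀ n : ℕ, ∑ j, ((n.factorial : ℝ))⁻¹ * (τ ^ n * (A ^ n) i j)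
        ≤ (τ * c) ^ n / (n.factorial : ℝ) := by
      intro n
      calc ∑ j, ((n.factorial : ℝ))⁻¹ * (τ ^ n * (A ^ n) i j)
          = ((n.factorial : ℝ))⁻¹ * (τ ^ n * ∑ j, (A ^ n) i j) := by
            simp only [← Finset.mul_sum]
        _ ≤ ((n.factorial : ℝ))⁻¹ * (τ ^ n * c ^ n) := by
            refine mul_le_mul_of_nonneg_left ?_ (by positivity)
            exact mul_le_mul_of_nonneg_left ((hpow n).2 i) (pow_nonneg hτ n)
        _ = (τ * c) ^ n / (n.factorial : ℝ) := by rw [mul_pow]; ring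
    have h4 : Summable (fun n : ℕ => ∑ j, ((n.factorial : ℝ))⁻¹ * (τ ^ n * (A ^ n) i j)) :=
      summable_sum fun j _ => hsum2' i j
    rw [h1]
    refine (Summable.tsum_le_tsum h2 h4 (Real.summable_pow_div_factorial (τ * c))).trans ?_
    rw [Real.exp_eq_exp_ℝ, NormedSpace.exp_eq_tsum_div]
  -- split the exponential
  have hsplit : τ • L = (-(τ * c)) • (1 : Matrix (Fin m) (Fin m) ℝ) + τ • A := by
    rw [hA]; module
  have hexpsplit : NormedSpace.exp (τ • L) = Real.exp (-(τ * c)) • E := by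
    rw [hsplit, Matrix.exp_add_of_commute _ _ ((Commute.one_left (τ • A)).smul_left _)]
    have h1 : (-(τ * c)) • (1 : Matrix (Fin m) (Fin m) ℝ) = algebraMap ℝ _ (-(τ * c)) :=
      (Algebra.algebraMap_eq_smul_one _).symm
    erw [h1, ← NormedSpace.algebraMap_exp_comm (𝔸 := Matrix (Fin m) (Fin m) ℝ), ← Real.exp_eq_exp_ℝ,
      Algebra.algebraMap_eq_smul_one, smul_mul_assoc, one_mul, hEdef]
  -- conclude
  rw [hexpsplit, pi_norm_le_iff_of_nonneg (norm_nonneg w)]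
  intro i
  have hmv : (Real.exp (-(τ * c)) • E).mulVec w i = Real.exp (-(τ * c)) * E.mulVec w i := by
    rw [Matrix.smul_mulVec]; simp
  rw [hmv, Real.norm_eq_abs, abs_mul, abs_of_pos (Real.exp_pos _)]
  have hmv2 : |E.mulVec w i| ≤ Real.exp (τ * c) * ‖w‖ := by
    have h0 : E.mulVec w i = ∑ j, E i j * w j := by
      simp [Matrix.mulVec, dotProduct]
    rw [h0]
    calc |∑ j, E i j * w j| ≤ ∑ j, |E i j * w j| := Finset.abs_sum_le_sum_abs _ _
      _ = ∑ j, E i j * |w j| := by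
          refine Finset.sum_congr rfl fun j _ => ?_
          rw [abs_mul, abs_of_nonneg (hE0 i j)]
      _ ≤ ∑ j, E i j * ‖w‖ := Finset.sum_le_sum fun j _ =>
          mul_le_mul_of_nonneg_left (by simpa [Real.norm_eq_abs] using norm_le_pi_norm w j)
            (hE0 i j)
      _ = (∑ j, E i j) * ‖w‖ := by rw [Finset.sum_mul]
      _ ≤ Real.exp (τ * c) * ‖w‖ :=
          mul_le_mul_of_nonneg_right (hErow i) (norm_nonneg w)
  calc Real.exp (-(τ * c)) * |E.mulVec w i|
      ≤ Real.exp (-(τ * c)) * (Real.exp (τ * c) * ‖w‖) :=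
        mul_le_mul_of_nonneg_left hmv2 (Real.exp_pos _).le
    _ = ‖w‖ := by rw [← mul_assoc, ← Real.exp_add]; simp
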